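/- Let Δ be a simplicial complex on [m], D a facet of Δ, Δ^D the full simplex on D, and Δ_{∖D} the complex with facets facet(Δ)∖{D}. Then r(A_Δ) ∩ ker A_{Δ_{∖D}} = r(A_{Δ^D}) ∩ ker A_{Δ_{∖D}} = Σ_{E ∈ Δ^D ∖ Δ_{∖D}} N_E. -/

import Mathlib

open Finset

namespace Hier

variable {m : ℕ}

abbrev Cell (I : Fin m → ℕ) := ∀ j, Fin (I j)

variable (I : Fin m → ℕ)

/-- standard inner product on ℚ^I -/
def dot (x y : Cell I → ℚ) : ℚ := ∑ i, x i * y i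

/-- L_E: tables depending only on the coordinates in E -/
def LL (E : Finset (Fin m)) : Submodule ℚ (Cell I → ℚ) where
  carrier := {x | ∀ i i' : Cell I, (∀ j ∈ E, i j = i' j) → x i = x i'}
  zero_mem' := by intro i i' _; rfl
  add_mem' := by
    intro a b ha hb i i' h
    simp only [Pi.add_apply, ha i i' h, hb i i' h]
  smul_mem' := by
    intro c a ha i i' h
    simp only [Pi.smul_apply, ha i i' h]

/-- orthogonal complement w.r.t. the standard inner product -/
def perp (S : Submodule ℚ (Cell I → ℚ)) : Submodule ℚ (Cell I → ℚ) where
  carrier := {y | ∀ x ∈ S, dot I x y = 0}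
  zero_mem' := by intro x hx; simp [dot]
  add_mem' := by
    intro a b ha hb x hx
    have h1 := ha x hx
    have h2 := hb x hx
    simp only [dot, Pi.add_apply, mul_add, Finset.sum_add_distrib] at *
    rw [h1, h2]; ring
  smul_mem' := by
    intro c a ha x hx
    have h1 := ha x hx
    simp only [dot, Pi.smul_apply, smul_eq_mul] at *
    calc ∑ i, x i * (c * a i) = c * ∑ i, x i * a i := by
          rw [Finset.mul_sum]; congr 1; funext i; ring
      _ = 0 := by rw [h1]; ring

/-- incremental subspace N_E -/
def NN (E : Finset (Fin m)) : Submodule ℚ (Cell I → ℚ) :=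
  LL I E ⊓ perp I (⨆ j ∈ E, LL I (E.erase j))

/-- F-marginal of x evaluated at the marginal cell i_F -/
def marg (x : Cell I → ℚ) (F : Finset (Fin m)) (i : Cell I) : ℚ :=
  ∑ j : Cell I, if ∀ k ∈ F, j k = i k then x j else 0

/-- kernel of the configuration determined by a family of facets:
tables all of whose F-marginals vanish, F ∈ Fs -/
def kern (Fs : Finset (Finset (Fin m))) : Submodule ℚ (Cell I → ℚ) where
  carrier := {y | ∀ F ∈ Fs, ∀ i, marg I y F i = 0}
  zero_mem' := by intro F hF i; simp [marg]
  add_mem' := by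
    intro a b ha hb F hF i
    have h1 := ha F hF i
    have h2 := hb F hF i
    simp only [marg, Pi.add_apply] at *
    have key : (∑ j : Cell I, if ∀ k ∈ F, j k = i k then a j + b j else 0)
        = (∑ j : Cell I, if ∀ k ∈ F, j k = i k then a j else 0)
          + (∑ j : Cell I, if ∀ k ∈ F, j k = i k then b j else 0) := by
      rw [← Finset.sum_add_distrib]
      apply Finset.sum_congr rfl
      intro j _
      split <;> simp
    rw [key, h1, h2]; ring
  smul_mem' := by
    intro c a ha F hF i
    have h1 := ha F hF i
    simp only [marg, Pi.smul_apply, smul_eq_mul] at *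
    calc ∑ j : Cell I, (if ∀ k ∈ F, j k = i k then c * a j else 0)
        = c * ∑ j : Cell I, (if ∀ k ∈ F, j k = i k then a j else 0) := by
          rw [Finset.mul_sum]; congr 1; funext j; split <;> simp
      _ = 0 := by rw [h1]; ring

/-- a (finite) abstract simplicial complex on [m] -/
def IsComplex (Δ : Finset (Finset (Fin m))) : Prop :=
  ∀ F ∈ Δ, ∀ F' ⊆ F, F' ∈ Δ

/-- the maximal elements (facets) of Δ -/
def facets (Δ : Finset (Finset (Fin m))) : Finset (Finset (Fin m)) :=
  Δ.filter (fun D => ∀ F ∈ Δ, D ⊆ F → F = D)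

/-- row space of the hierarchical-model configuration A_Δ -/
def rowsp (Δ : Finset (Finset (Fin m))) : Submodule ℚ (Cell I → ℚ) :=
  ⨆ D ∈ facets Δ, LL I D

/-- single partial difference operator ∂_j -/
def pd1 (hI : ∀ j, 0 < I j) (j : Fin m) (x : Cell I → ℚ) : Cell I → ℚ :=
  fun i => x i - x (Function.update i j ⟨0, hI j⟩)

/-- ∂_E: composition of the (commuting) ∂_j, j ∈ E -/
noncomputable def pdE (hI : ∀ j, 0 < I j) (E : Finset (Fin m)) : (Cell I → ℚ) → (Cell I → ℚ) :=
  E.toList.foldr (fun j f => pd1 I hI j ∘ f) id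


/-- the simplicial complex `Δ_{∖D}` obtained by deleting the facet `D` from `facet(Δ)`. -/
def delFacet (Δ : Finset (Finset (Fin m))) (D : Finset (Fin m)) : Finset (Finset (Fin m)) :=
  Δ.filter (fun F => ∃ D' ∈ (facets Δ).erase D, F ⊆ D')
section Aux

variable {I}

@[simp] lemma mem_LL {E : Finset (Fin m)} {x : Cell I → ℚ} :
    x ∈ LL I E ↔ ∀ i i' : Cell I, (∀ j ∈ E, i j = i' j) → x i = x i' := Iff.rfl

@[simp] lemma mem_perp {S : Submodule ℚ (Cell I → ℚ)} {y : Cell I → ℚ} :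
    y ∈ perp I S ↔ ∀ x ∈ S, dot I x y = 0 := Iff.rfl

@[simp] lemma mem_kern {Fs : Finset (Finset (Fin m))} {y : Cell I → ℚ} :
    y ∈ kern I Fs ↔ ∀ F ∈ Fs, ∀ i, marg I y F i = 0 := Iff.rfl

lemma dot_comm (x y : Cell I → ℚ) : dot I x y = dot I y x :=
  Finset.sum_congr rfl fun i _ => mul_comm _ _

lemma dot_add_left (x x' y : Cell I → ℚ) :
    dot I (x + x') y = dot I x y + dot I x' y := by
  simp [dot, add_mul, Finset.sum_add_distrib]

lemma dot_smul_left (c : ℚ) (x y : Cell I → ℚ) :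
    dot I (c • x) y = c * dot I x y := by
  simp [dot, Finset.mul_sum, mul_assoc]

lemma dot_sub_left (x x' y : Cell I → ℚ) :
    dot I (x - x') y = dot I x y - dot I x' y := by
  simp [dot, sub_mul, Finset.sum_sub_distrib]

lemma dot_self_nonneg (x : Cell I → ℚ) : 0 ≤ dot I x x :=
  Finset.sum_nonneg fun i _ => mul_self_nonneg _

lemma eq_zero_of_dot_self (x : Cell I → ℚ) (h : dot I x x = 0) : x = 0 := by
  funext i
  have := (Finset.sum_eq_zero_iff_of_nonneg (fun i _ => mul_self_nonneg (x i))).mp h i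
    (Finset.mem_univ i)
  have := mul_self_eq_zero.mp this
  simpa using this

/-- the dot product as a bilinear form -/
noncomputable def BF (I : Fin m → ℕ) : LinearMap.BilinForm ℚ (Cell I → ℚ) :=
  LinearMap.mk₂ ℚ (dot I)
    (fun x x' y => dot_add_left x x' y)
    (fun c x y => by rw [dot_smul_left, smul_eq_mul])
    (fun x y y' => by rw [dot_comm, dot_add_left, dot_comm y x, dot_comm y' x])
    (fun c x y => by rw [dot_comm, dot_smul_left, dot_comm y x, smul_eq_mul])

@[simp] lemma BF_apply (x y : Cell I → ℚ) : BF I x y = dot I x y := rfl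

lemma BF_isRefl : (BF I).IsRefl := by
  intro x y h
  simpa [dot_comm y x] using h

lemma perp_eq_orthogonal (S : Submodule ℚ (Cell I → ℚ)) :
    perp I S = (BF I).orthogonal S := by
  ext y
  constructor
  · intro h n hn
    exact h n hn
  · intro h x hx
    exact h x hx

lemma sup_perp_eq_top (S : Submodule ℚ (Cell I → ℚ)) : S ⊔ perp I S = ⊤ := by
  rw [perp_eq_orthogonal]
  have hnd : ((BF I).restrict S).Nondegenerate := by
    constructor
    all_goals
      intro ⟨x, hx⟩ h
      have := h ⟨x, hx⟩
      simp only [LinearMap.BilinForm.restrict_apply] at this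
      exact Subtype.ext (eq_zero_of_dot_self x this)
  exact ((BF I).isCompl_orthogonal_of_restrict_nondegenerate BF_isRefl hnd).sup_eq_top

end Aux
section Avg

variable {I}

/-- averaging over coordinate `j` -/
noncomputable def avg (j : Fin m) (x : Cell I → ℚ) : Cell I → ℚ :=
  fun i => (∑ v : Fin (I j), x (Function.update i j v)) / (I j)

lemma avg_selfadjoint (j : Fin m) (x y : Cell I → ℚ) :
    dot I (avg j x) y = dot I x (avg j y) := by
  have key : ∑ p : Cell I × Fin (I j), x (Function.update p.1 j p.2) * y p.1
      = ∑ p : Cell I × Fin (I j), x p.1 * y (Function.update p.1 j p.2) := by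
    apply Fintype.sum_equiv
      (Equiv.mk (fun p => (Function.update p.1 j p.2, p.1 j))
        (fun p => (Function.update p.1 j p.2, p.1 j))
        (fun p => by simp [Function.update_idem]
        ) (fun p => by simp [Function.update_idem]))
    intro p
    simp [Function.update_idem]
  have h1 : dot I (avg j x) y
      = (∑ p : Cell I × Fin (I j), x (Function.update p.1 j p.2) * y p.1) / (I j) := by
    rw [dot, Fintype.sum_prod_type, Finset.sum_div]
    apply Finset.sum_congr rfl
    intro i _
    rw [avg, div_mul_eq_mul_div, Finset.sum_mul]
  have h2 : dot I x (avg j y)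
      = (∑ p : Cell I × Fin (I j), x p.1 * y (Function.update p.1 j p.2)) / (I j) := by
    rw [dot, Fintype.sum_prod_type, Finset.sum_div]
    apply Finset.sum_congr rfl
    intro i _
    rw [avg, ← mul_div_assoc, Finset.mul_sum]
  rw [h1, h2, key]

lemma avg_mem_LL {E : Finset (Fin m)} {x : Cell I → ℚ} (hx : x ∈ LL I E) (j : Fin m) :
    avg j x ∈ LL I (E.erase j) := by
  intro i i' h
  unfold avg
  congr 1
  apply Finset.sum_congr rfl
  intro v _
  apply hx
  intro k hk
  rcases eq_or_ne k j with rfl | hkj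
  · simp
  · rw [Function.update_of_ne hkj, Function.update_of_ne hkj]
    exact h k (Finset.mem_erase.mpr ⟨hkj, hk⟩)

lemma mem_LL_univ (x : Cell I → ℚ) : x ∈ LL I Finset.univ := by
  intro i i' h
  congr 1
  funext k
  exact h k (Finset.mem_univ k)

lemma avg_of_not_mem (hI : ∀ j, 2 ≤ I j) {E : Finset (Fin m)} {x : Cell I → ℚ}
    (hx : x ∈ LL I E) {j : Fin m} (hj : j ∉ E) : avg j x = x := by
  funext i
  have : ∀ v : Fin (I j), x (Function.update i j v) = x i := by
    intro v
    apply hx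
    intro k hk
    rw [Function.update_of_ne (fun h => hj (by rw [← h]; exact hk))]
  have hne : (I j : ℚ) ≠ 0 := by
    have := hI j; positivity
  rw [avg]
  simp only [this, Finset.sum_const, Finset.card_univ, Fintype.card_fin, nsmul_eq_mul]
  field_simp

lemma avg_idem (hI : ∀ j, 2 ≤ I j) (j : Fin m) (x : Cell I → ℚ) :
    avg j (avg j x) = avg j x := by
  apply avg_of_not_mem hI (avg_mem_LL (mem_LL_univ x) j)
  simp

lemma avg_eq_zero (hI : ∀ j, 2 ≤ I j) {E : Finset (Fin m)} {x : Cell I → ℚ}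
    (hx : x ∈ NN I E) {j : Fin m} (hj : j ∈ E) : avg j x = 0 := by
  obtain ⟨hx1, hx2⟩ := hx
  have hmem : avg j x ∈ LL I (E.erase j) := avg_mem_LL hx1 j
  have hle : LL I (E.erase j) ≤ ⨆ k ∈ E, LL I (E.erase k) :=
    le_iSup₂_of_le j hj le_rfl
  have h0 : dot I (avg j x) x = 0 := hx2 (avg j x) (hle hmem)
  apply eq_zero_of_dot_self
  rw [avg_selfadjoint, avg_idem hI, dot_comm]
  exact h0

@[simp] lemma dot_zero_left (y : Cell I → ℚ) : dot I 0 y = 0 := by simp [dot]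

@[simp] lemma dot_zero_right (y : Cell I → ℚ) : dot I y 0 = 0 := by simp [dot]

lemma NN_ortho (hI : ∀ j, 2 ≤ I j) {E E' : Finset (Fin m)} (hEE : E ≠ E')
    {x y : Cell I → ℚ} (hx : x ∈ NN I E) (hy : y ∈ NN I E') : dot I x y = 0 := by
  by_cases hc : ∃ j ∈ E, j ∉ E'
  · obtain ⟨j, hjE, hjE'⟩ := hc
    have hy' : avg j y = y := avg_of_not_mem hI hy.1 hjE'
    have hx' : avg j x = 0 := avg_eq_zero hI hx hjE
    calc dot I x y = dot I x (avg j y) := by rw [hy']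
      _ = dot I (avg j x) y := (avg_selfadjoint j x y).symm
      _ = 0 := by rw [hx']; simp
  · push_neg at hc
    have hsub : E ⊆ E' := hc
    obtain ⟨j, hjE', hjE⟩ : ∃ j ∈ E', j ∉ E := by
      by_contra h
      push_neg at h
      exact hEE (Finset.Subset.antisymm hsub h)
    have hx' : avg j x = x := avg_of_not_mem hI hx.1 hjE
    have hy' : avg j y = 0 := avg_eq_zero hI hy hjE'
    calc dot I x y = dot I (avg j x) y := by rw [hx']
      _ = dot I x (avg j y) := avg_selfadjoint j x y
      _ = 0 := by rw [hy']; simp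

end Avg
section Decomp

variable {I}

lemma LL_mono {E E' : Finset (Fin m)} (h : E ⊆ E') : LL I E ≤ LL I E' := by
  intro x hx i i' hii
  exact hx i i' fun j hj => hii j (h hj)

lemma NN_le_LL (E : Finset (Fin m)) : NN I E ≤ LL I E := inf_le_left

lemma LL_eq_iSup_NN (E : Finset (Fin m)) :
    LL I E = ⨆ E' ∈ E.powerset, NN I E' := by
  induction E using Finset.strongInduction with
  | _ E ih =>
    apply le_antisymm
    · intro x hx
      set W := ⨆ j ∈ E, LL I (E.erase j) with hW
      have hWle : W ≤ LL I E := by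
        apply iSup₂_le
        intro j hj
        exact LL_mono (Finset.erase_subset j E)
      have htop : W ⊔ perp I W = ⊤ := sup_perp_eq_top W
      have hxmem : x ∈ W ⊔ perp I W := htop ▸ Submodule.mem_top
      obtain ⟨w, hw, p, hp, hwp⟩ := Submodule.mem_sup.mp hxmem
      have hpE : p ∈ LL I E := by
        have : p = x - w := by rw [← hwp]; ring
        rw [this]
        exact Submodule.sub_mem _ hx (hWle hw)
      have hpN : p ∈ NN I E := ⟨hpE, hp⟩
      have hwle : w ∈ ⨆ E' ∈ E.powerset, NN I E' := by
        refine (iSup₂_le fun j hj => ?_ : W ≤ ⨆ E' ∈ E.powerset, NN I E') hw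
        rw [ih (E.erase j) (Finset.erase_ssubset hj)]
        apply iSup₂_le
        intro E' hE'
        have : E' ⊆ E := (Finset.mem_powerset.mp hE').trans (Finset.erase_subset j E)
        exact le_iSup₂_of_le E' (Finset.mem_powerset.mpr this) le_rfl
      have : x = w + p := hwp.symm
      rw [this]
      exact Submodule.add_mem _ hwle
        ((le_iSup₂_of_le E (Finset.mem_powerset.mpr le_rfl) le_rfl : NN I E ≤ _) hpN)
    · apply iSup₂_le
      intro E' hE'
      exact (NN_le_LL E').trans (LL_mono (Finset.mem_powerset.mp hE'))

/-- right-annihilator of `y` -/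
def Zd (y : Cell I → ℚ) : Submodule ℚ (Cell I → ℚ) where
  carrier := {t | dot I t y = 0}
  zero_mem' := by simp
  add_mem' := by
    intro a b ha hb
    simp only [Set.mem_setOf_eq] at *
    rw [dot_add_left, ha, hb, add_zero]
  smul_mem' := by
    intro c a ha
    simp only [Set.mem_setOf_eq] at *
    rw [dot_smul_left, ha, mul_zero]

@[simp] lemma mem_Zd {y t : Cell I → ℚ} : t ∈ Zd y ↔ dot I t y = 0 := Iff.rfl

end Decomp
section Kern

variable {I}

/-- indicator of the `F`-agreement class of `i` -/
def chi (F : Finset (Fin m)) (i : Cell I) : Cell I → ℚ :=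
  fun j => if ∀ k ∈ F, j k = i k then 1 else 0

lemma chi_mem_LL (F : Finset (Fin m)) (i : Cell I) : chi F i ∈ LL I F := by
  intro j j' h
  unfold chi
  have : (∀ k ∈ F, j k = i k) ↔ (∀ k ∈ F, j' k = i k) := by
    constructor
    · intro hh k hk; rw [← h k hk]; exact hh k hk
    · intro hh k hk; rw [h k hk]; exact hh k hk
  simp only [this]

lemma marg_eq_dot (y : Cell I → ℚ) (F : Finset (Fin m)) (i : Cell I) :
    marg I y F i = dot I (chi F i) y := by
  unfold marg dot chi
  apply Finset.sum_congr rfl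
  intro j _
  split <;> simp

lemma marg_eq_zero_of_perp {y : Cell I → ℚ} {F : Finset (Fin m)}
    (h : y ∈ perp I (LL I F)) (i : Cell I) : marg I y F i = 0 := by
  rw [marg_eq_dot]
  exact h _ (chi_mem_LL F i)

/-- retraction used to show kern ⊆ perp -/
def rho (hI : ∀ j, 2 ≤ I j) (F : Finset (Fin m)) (i : Cell I) : Cell I :=
  fun k => if k ∈ F then i k else ⟨0, lt_of_lt_of_le two_pos (hI k)⟩

lemma rho_agree (hI : ∀ j, 2 ≤ I j) (F : Finset (Fin m)) (i : Cell I) :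
    ∀ k ∈ F, rho hI F i k = i k := by
  intro k hk; simp [rho, hk]

lemma rho_idem (hI : ∀ j, 2 ≤ I j) (F : Finset (Fin m)) (i : Cell I) :
    rho hI F (rho hI F i) = rho hI F i := by
  funext k
  by_cases hk : k ∈ F <;> simp [rho, hk]

lemma mem_perp_of_marg {y : Cell I → ℚ} {F : Finset (Fin m)} (hI : ∀ j, 2 ≤ I j)
    (h : ∀ i, marg I y F i = 0) : y ∈ perp I (LL I F) := by
  intro x hx
  have hstep : dot I x y = ∑ i : Cell I, x (rho hI F i) * y i := by
    apply Finset.sum_congr rfl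
    intro i _
    congr 1
    exact hx i (rho hI F i) (fun k hk => (rho_agree hI F i k hk).symm)
  rw [hstep, ← Finset.sum_fiberwise_of_maps_to (g := rho hI F)
    (fun i _ => Finset.mem_univ (rho hI F i)) (fun i => x (rho hI F i) * y i)]
  apply Finset.sum_eq_zero
  intro i₀ _
  by_cases hfix : rho hI F i₀ = i₀
  · have hfil : ∀ i : Cell I, rho hI F i = i₀ ↔ ∀ k ∈ F, i k = i₀ k := by
      intro i
      constructor
      · intro hi k hk
        rw [← hi]
        exact (rho_agree hI F i k hk).symm
      · intro hi
        rw [← hfix]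
        funext k
        by_cases hk : k ∈ F <;> simp [rho, hk, hi]
    have : ∑ i ∈ Finset.univ.filter (fun i => rho hI F i = i₀), x (rho hI F i) * y i
        = x i₀ * marg I y F i₀ := by
      rw [marg, Finset.mul_sum, Finset.sum_filter]
      apply Finset.sum_congr rfl
      intro i _
      by_cases hi : rho hI F i = i₀
      · rw [if_pos hi, if_pos ((hfil i).mp hi), hi]
      · rw [if_neg hi, if_neg (fun hh => hi ((hfil i).mpr hh)), mul_zero]
    rw [this, h i₀, mul_zero]
  · apply Finset.sum_eq_zero
    intro i hi
    exfalso
    apply hfix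
    have := (Finset.mem_filter.mp hi).2
    rw [← this, rho_idem]

lemma kern_iff_perp (hI : ∀ j, 2 ≤ I j) {Fs : Finset (Finset (Fin m))} {y : Cell I → ℚ} :
    y ∈ kern I Fs ↔ ∀ F ∈ Fs, y ∈ perp I (LL I F) := by
  constructor
  · intro h F hF
    exact mem_perp_of_marg hI (h F hF)
  · intro h F hF i
    exact marg_eq_zero_of_perp (h F hF) i

lemma dot_eq_zero_of_kern (hI : ∀ j, 2 ≤ I j) {Fs : Finset (Finset (Fin m))}
    {y : Cell I → ℚ} (hy : y ∈ kern I Fs) {t : Cell I → ℚ}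
    (ht : t ∈ ⨆ F ∈ Fs, LL I F) : dot I t y = 0 := by
  have : (⨆ F ∈ Fs, LL I F) ≤ Zd y := by
    apply iSup₂_le
    intro F hF x hx
    exact ((kern_iff_perp hI).mp hy F hF) x hx
  exact this ht

/-- if `E` is not contained in any `F ∈ Fs`, then `N_E ≤ kern Fs` -/
lemma NN_le_kern (hI : ∀ j, 2 ≤ I j) {Fs : Finset (Finset (Fin m))} {E : Finset (Fin m)}
    (h : ∀ F ∈ Fs, ¬ E ⊆ F) : NN I E ≤ kern I Fs := by
  intro y hy
  rw [mem_kern]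
  intro F hF i
  apply marg_eq_zero_of_perp (i := i)
  intro x hx
  rw [LL_eq_iSup_NN] at hx
  refine (iSup₂_le fun E' hE' => ?_ : _ ≤ Zd y) hx
  intro t ht
  refine NN_ortho hI ?_ ht hy
  intro hEE
  exact h F hF (hEE ▸ Finset.mem_powerset.mp hE')
end Kern
section Facets

variable {I}

lemma mem_facets_iff {Δ : Finset (Finset (Fin m))} {F : Finset (Fin m)} :
    F ∈ facets Δ ↔ F ∈ Δ ∧ ∀ F' ∈ Δ, F ⊆ F' → F' = F := Finset.mem_filter

lemma facets_subset {Δ : Finset (Finset (Fin m))} : facets Δ ⊆ Δ :=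
  Finset.filter_subset _ _

lemma exists_facet {Δ : Finset (Finset (Fin m))} {F : Finset (Fin m)} (hF : F ∈ Δ) :
    ∃ G ∈ facets Δ, F ⊆ G := by
  obtain ⟨a, ha, hmax⟩ := (Δ.filter (fun G => F ⊆ G)).exists_maximal
    ⟨F, Finset.mem_filter.mpr ⟨hF, le_rfl⟩⟩
  obtain ⟨haΔ, hFa⟩ := Finset.mem_filter.mp ha
  refine ⟨a, mem_facets_iff.mpr ⟨haΔ, fun F' hF' haF' => ?_⟩, hFa⟩
  have hF's : F' ∈ Δ.filter (fun G => F ⊆ G) :=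
    Finset.mem_filter.mpr ⟨hF', hFa.trans haF'⟩
  have := hmax hF's haF'
  exact Finset.Subset.antisymm this haF'

lemma mem_delFacet_iff {Δ : Finset (Finset (Fin m))} {D F : Finset (Fin m)} :
    F ∈ delFacet Δ D ↔ F ∈ Δ ∧ ∃ D' ∈ (facets Δ).erase D, F ⊆ D' := Finset.mem_filter

lemma facets_delFacet {Δ : Finset (Finset (Fin m))} (hΔ : IsComplex Δ)
    {D : Finset (Fin m)} (hD : D ∈ facets Δ) :
    facets (delFacet Δ D) = (facets Δ).erase D := by
  ext F
  constructor
  · intro hF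
    obtain ⟨hF1, hmax⟩ := mem_facets_iff.mp hF
    obtain ⟨hFΔ, D', hD', hFD'⟩ := mem_delFacet_iff.mp hF1
    have hD'del : D' ∈ delFacet Δ D :=
      mem_delFacet_iff.mpr ⟨facets_subset (Finset.mem_of_mem_erase hD'), ⟨D', hD', le_rfl⟩⟩
    have := hmax D' hD'del hFD'
    rwa [this] at hD'
  · intro hF
    have hFfac := Finset.mem_of_mem_erase hF
    refine mem_facets_iff.mpr ⟨mem_delFacet_iff.mpr ⟨facets_subset hFfac, ⟨F, hF, le_rfl⟩⟩,
      fun F' hF' hFF' => ?_⟩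
    exact (mem_facets_iff.mp hFfac).2 F' (Finset.filter_subset _ _ hF') hFF'

lemma rowsp_eq_iSup_NN {Δ : Finset (Finset (Fin m))} (hΔ : IsComplex Δ) :
    rowsp I Δ = ⨆ E ∈ Δ, NN I E := by
  apply le_antisymm
  · apply iSup₂_le
    intro F hF
    rw [LL_eq_iSup_NN]
    apply iSup₂_le
    intro E hE
    exact le_iSup₂_of_le E (hΔ F (facets_subset hF) E (Finset.mem_powerset.mp hE)) le_rfl
  · apply iSup₂_le
    intro E hE
    obtain ⟨G, hG, hEG⟩ := exists_facet hE
    exact le_iSup₂_of_le G hG ((NN_le_LL E).trans (LL_mono hEG))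

lemma powerset_isComplex (D : Finset (Fin m)) : IsComplex (D.powerset : Finset (Finset (Fin m))) :=
  fun F hF F' hF' => Finset.mem_powerset.mpr (hF'.trans (Finset.mem_powerset.mp hF))

/-- main computation -/
lemma inter_kern_eq (hI : ∀ j, 2 ≤ I j) {Δ : Finset (Finset (Fin m))} (hΔ : IsComplex Δ)
    {D : Finset (Fin m)} (hD : D ∈ facets Δ) {G : Finset (Finset (Fin m))}
    (hG : ∀ E ∈ G, E ∈ delFacet Δ D ∨ E ∈ D.powerset \ delFacet Δ D)
    (hSG : D.powerset \ delFacet Δ D ⊆ G) :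
    (⨆ E ∈ G, NN I E) ⊓ kern I ((facets Δ).erase D)
      = ⨆ E ∈ D.powerset \ delFacet Δ D, NN I E := by
  set S := D.powerset \ delFacet Δ D with hS
  have hSK : (⨆ E ∈ S, NN I E) ≤ kern I ((facets Δ).erase D) := by
    apply iSup₂_le
    intro E hE
    obtain ⟨hED, hEdel⟩ := Finset.mem_sdiff.mp hE
    apply NN_le_kern hI
    intro F hF hEF
    exact hEdel (mem_delFacet_iff.mpr
      ⟨hΔ D (facets_subset hD) E (Finset.mem_powerset.mp hED), ⟨F, hF, hEF⟩⟩)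
  apply le_antisymm
  · intro x hx
    obtain ⟨hx1, hx2⟩ := Submodule.mem_inf.mp hx
    have hsplit : (⨆ E ∈ G, NN I E) ≤ (⨆ E ∈ S, NN I E) ⊔ (⨆ E ∈ delFacet Δ D, NN I E) := by
      apply iSup₂_le
      intro E hE
      rcases hG E hE with h | h
      · exact le_sup_of_le_right (le_iSup₂_of_le E h le_rfl)
      · exact le_sup_of_le_left (le_iSup₂_of_le E h le_rfl)
    obtain ⟨s, hs, t, ht, hst⟩ := Submodule.mem_sup.mp (hsplit hx1)
    have htW : t ∈ ⨆ F ∈ (facets Δ).erase D, LL I F := by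
      refine (iSup₂_le fun E hE => ?_ : (⨆ E ∈ delFacet Δ D, NN I E) ≤ _) ht
      obtain ⟨hEΔ, D', hD', hED'⟩ := mem_delFacet_iff.mp hE
      exact le_iSup₂_of_le D' hD' ((NN_le_LL E).trans (LL_mono hED'))
    have hsK : s ∈ kern I ((facets Δ).erase D) := hSK hs
    have htK : t ∈ kern I ((facets Δ).erase D) := by
      have : t = x - s := by rw [← hst]; ring
      rw [this]
      exact Submodule.sub_mem _ hx2 hsK
    have ht0 : t = 0 := eq_zero_of_dot_self t (by
      rw [dot_comm]
      exact dot_eq_zero_of_kern hI htK htW)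
    rw [← hst, ht0, add_zero]
    exact hs
  · refine le_inf ?_ hSK
    apply iSup₂_le
    intro E hE
    exact le_iSup₂_of_le E (hSG hE) le_rfl

end Facets
/-- Proposition 2: `r(A_Δ) ∩ ker A_{Δ∖D} = r(A_{Δ^D}) ∩ ker A_{Δ∖D}
  = Σ_{E ∈ Δ^D ∖ Δ∖D} N_E`. -/
theorem stmt9 (hI : ∀ j, 2 ≤ I j) (Δ : Finset (Finset (Fin m))) (hΔ : IsComplex Δ)
    (D : Finset (Fin m)) (hD : D ∈ facets Δ) :
    rowsp I Δ ⊓ kern I (facets (delFacet Δ D))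
      = rowsp I D.powerset ⊓ kern I (facets (delFacet Δ D)) ∧
    rowsp I D.powerset ⊓ kern I (facets (delFacet Δ D))
      = ⨆ E ∈ D.powerset \ delFacet Δ D, NN I E := by
  have hK : facets (delFacet Δ D) = (facets Δ).erase D := facets_delFacet hΔ hD
  have hDΔ : D ∈ Δ := facets_subset hD
  have h1 : rowsp I Δ ⊓ kern I ((facets Δ).erase D)
      = ⨆ E ∈ D.powerset \ delFacet Δ D, NN I E := by
    rw [rowsp_eq_iSup_NN hΔ]
    apply inter_kern_eq hI hΔ hD
    · intro E hE
      by_cases h : E ∈ delFacet Δ D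
      · left; exact h
      · right
        refine Finset.mem_sdiff.mpr ⟨Finset.mem_powerset.mpr ?_, h⟩
        obtain ⟨G, hG, hEG⟩ := exists_facet hE
        rcases eq_or_ne G D with rfl | hGD
        · exact hEG
        · exact absurd (mem_delFacet_iff.mpr ⟨hE, G, Finset.mem_erase.mpr ⟨hGD, hG⟩, hEG⟩) h
    · intro E hE
      exact hΔ D hDΔ E (Finset.mem_powerset.mp (Finset.mem_sdiff.mp hE).1)
  have h2 : rowsp I D.powerset ⊓ kern I ((facets Δ).erase D)
      = ⨆ E ∈ D.powerset \ delFacet Δ D, NN I E := by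
    rw [rowsp_eq_iSup_NN (powerset_isComplex D)]
    apply inter_kern_eq hI hΔ hD
    · intro E hE
      by_cases h : E ∈ delFacet Δ D
      · left; exact h
      · right; exact Finset.mem_sdiff.mpr ⟨hE, h⟩
    · exact Finset.sdiff_subset
  rw [hK]
  exact ⟨h1.trans h2.symm, h2⟩


end Hier
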